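/- Let K be a field of characteristic zero with a derivation d, and let C be an r×r matrix over K such that d(trace(C^j)) = 0 for all j ≥ 1. If α is an eigenvalue of C lying in K and d extends to the algebraic closure, then every eigenvalue of C (in an algebraically closed extension with the extended derivation) is killed by the extended derivation. -/

import Mathlib

open Polynomial Matrix Module LinearMap

set_option linter.unusedSectionVars false
set_option linter.unusedVariables false

section DerAux

variable {L : Type*} [Field L] {D : L → L}
  (hD_add : ∀ a b : L, D (a + b) = D a + D b)
  (hD_mul : ∀ a b : L, D (a * b) = D a * b + a * D b)

include hD_add in
lemma der_zero' : D 0 = 0 := by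
  have h := hD_add 0 0
  rw [add_zero] at h
  exact (add_eq_left.mp h.symm)

include hD_mul in
lemma der_one' : D 1 = 0 := by
  have h := hD_mul 1 1
  simp only [mul_one, one_mul] at h
  exact (add_eq_left.mp h.symm)

include hD_add hD_mul in
lemma der_nat' (n : ℕ) : D (n : L) = 0 := by
  induction n with
  | zero => exact_mod_cast der_zero' hD_add
  | succ k ih =>
    push_cast
    rw [hD_add, ih, der_one' hD_mul, add_zero]

include hD_add hD_mul in
lemma der_pow' (x : L) (j : ℕ) : D (x ^ j) = (j : L) * x ^ (j - 1) * D x := by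
  induction j with
  | zero => simpa using der_one' hD_mul
  | succ k ih =>
    rw [pow_succ, hD_mul, ih]
    cases k with
    | zero => simp
    | succ m =>
      simp only [Nat.add_sub_cancel]
      push_cast
      ring

include hD_add in
lemma der_sum' {ι : Type*} (s : Finset ι) (g : ι → L) :
    D (∑ i ∈ s, g i) = ∑ i ∈ s, D (g i) := by
  classical
  induction s using Finset.induction_on with
  | empty => simpa using der_zero' hD_add
  | insert _ _ h ih => rw [Finset.sum_insert h, Finset.sum_insert h, hD_add, ih]

end DerAux


lemma trace_restrict_pow_maxGen {L V : Type*} [Field L] [AddCommGroup V] [Module L V]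
    [FiniteDimensional L V] (f : Module.End L V) (μ : L) (j : ℕ)
    (h : Set.MapsTo ⇑(f ^ j) ↑(f.maxGenEigenspace μ) ↑(f.maxGenEigenspace μ)) :
    LinearMap.trace L (f.maxGenEigenspace μ) ((f ^ j).restrict h) =
      μ ^ j * (Module.finrank L (f.maxGenEigenspace μ) : L) := by
  have hf : ∀ x ∈ f.maxGenEigenspace μ, f x ∈ f.maxGenEigenspace μ :=
    fun x hx => f.mapsTo_maxGenEigenspace_of_comm (Commute.refl f) μ hx
  have hpow : (f ^ j).restrict h = (f.restrict hf) ^ j := by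
    rw [Module.End.pow_restrict]
  set g := f.restrict hf with hg
  set N := g - μ • (1 : Module.End L (f.maxGenEigenspace μ)) with hNdef
  have hN : IsNilpotent N := by
    have h2 := f.isNilpotent_restrict_maxGenEigenspace_sub_algebraMap μ
    convert h2 using 1
    rw [hNdef, hg]; ext x; simp [Module.algebraMap_end_apply, LinearMap.restrict_apply]; rfl
  have hgeq : g = μ • 1 + N := by rw [hNdef]; abel
  have hcomm : Commute (μ • (1 : Module.End L (f.maxGenEigenspace μ))) N :=
    (Commute.one_left N).smul_left μ
  rw [hpow, hgeq, hcomm.add_pow, map_sum]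
  rw [Finset.sum_eq_single j]
  · rw [Nat.sub_self, pow_zero, mul_one, Nat.choose_self, Nat.cast_one, mul_one,
      _root_.smul_pow, one_pow, _root_.map_smul, LinearMap.trace_one, smul_eq_mul]
  · intro k hk hkj
    have hk1 : 1 ≤ j - k := by
      have : k < j := lt_of_le_of_ne (Nat.lt_succ_iff.mp (Finset.mem_range.mp hk)) hkj
      omega
    have hnil : IsNilpotent (N ^ (j - k)) := by
      obtain ⟨n, hn⟩ := hN
      refine ⟨n, ?_⟩
      rw [← pow_mul]
      exact pow_eq_zero_of_le (Nat.le_mul_of_pos_left n (by omega)) hn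
    have hz := (LinearMap.isNilpotent_trace_of_isNilpotent hnil).eq_zero
    have heq : ((μ • (1 : Module.End L (f.maxGenEigenspace μ))) ^ k * N ^ (j - k) *
        ((j.choose k : ℕ) : Module.End L (f.maxGenEigenspace μ)))
        = (μ ^ k) • ((j.choose k) • (N ^ (j - k))) := by
      rw [_root_.smul_pow, one_pow, smul_mul_assoc, smul_mul_assoc, one_mul,
        ← (Nat.cast_commute (j.choose k) (N ^ (j - k))).eq, ← nsmul_eq_mul]
    rw [heq, _root_.map_smul, map_nsmul, hz]
    simp
  · intro hj
    simp at hj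


/-- Let `K` be a field of characteristic zero with a derivation `d`, and
`C` an `r × r` matrix over `K` with `d(trace(C ^ j)) = 0` for all `j ≥ 1`.  If `α` is an
eigenvalue of `C` lying in `K`, and `D` is the (unique) extension of the derivation `d`
to an algebraically closed algebraic extension `L` of `K`, then every eigenvalue of `C`
in `L` (i.e. every root of the characteristic polynomial of `C` over `L`) is killed
by `D`. -/
theorem stmt2 {K L : Type*} [Field K] [CharZero K] [Field L] [Algebra K L]
    [IsAlgClosed L] [Algebra.IsAlgebraic K L] {r : ℕ}
    (d : K → K)
    (hd_add : ∀ a b : K, d (a + b) = d a + d b)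
    (hd_mul : ∀ a b : K, d (a * b) = d a * b + a * d b)
    (D : L → L)
    (hD_add : ∀ a b : L, D (a + b) = D a + D b)
    (hD_mul : ∀ a b : L, D (a * b) = D a * b + a * D b)
    (hD_ext : ∀ a : K, D (algebraMap K L a) = algebraMap K L (d a))
    (C : Matrix (Fin r) (Fin r) K)
    (htr : ∀ j : ℕ, 1 ≤ j → d (Matrix.trace (C ^ j)) = 0)
    (hα : ∃ α : K, (Matrix.charpoly C).IsRoot α) :
    ∀ β : L, ((C.map (algebraMap K L)).charpoly).IsRoot β → D β = 0 := by
  intro β hβ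
  haveI : CharZero L := charZero_of_injective_algebraMap (algebraMap K L).injective
  classical
  set M : Matrix (Fin r) (Fin r) L := C.map (algebraMap K L) with hM
  set f : Module.End L (Fin r → L) := Matrix.toLinAlgEquiv' M with hfdef
  have htrM : ∀ j : ℕ, M ^ j = (C ^ j).map (algebraMap K L) := by
    intro j
    simp only [hM, ← RingHom.mapMatrix_apply, ← map_pow]
  have htrL : ∀ j : ℕ, 1 ≤ j → D (Matrix.trace (M ^ j)) = 0 := by
    intro j hj
    rw [htrM j]
    have h2 : Matrix.trace ((C ^ j).map (algebraMap K L))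
        = algebraMap K L (Matrix.trace (C ^ j)) := by
      simp [Matrix.trace, Matrix.diag, Matrix.map_apply]
    rw [h2, hD_ext, htr j hj, map_zero]
  have htrf : ∀ j : ℕ, LinearMap.trace L (Fin r → L) (f ^ j) = Matrix.trace (M ^ j) := by
    intro j
    rw [hfdef, ← map_pow]
    rw [LinearMap.trace_eq_matrix_trace L (Pi.basisFun L (Fin r)),
      LinearMap.toMatrix_eq_toMatrix']
    congr 1
    exact LinearMap.toMatrix'_toLin' (M ^ j)
  have hind := Module.End.independent_maxGenEigenspace f
  have hfin : {μ : L | f.maxGenEigenspace μ ≠ ⊥}.Finite :=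
    WellFoundedGT.finite_ne_bot_of_iSupIndep hind
  have hint : DirectSum.IsInternal (fun μ : L ↦ f.maxGenEigenspace μ) :=
    DirectSum.isInternal_submodule_of_iSupIndep_of_iSup_eq_top hind
      (Module.End.iSup_maxGenEigenspace_eq_top f)
  have hmaps : ∀ (j : ℕ) (μ : L),
      Set.MapsTo ⇑(f ^ j) ↑(f.maxGenEigenspace μ) ↑(f.maxGenEigenspace μ) :=
    fun j μ => f.mapsTo_maxGenEigenspace_of_comm ((Commute.refl f).pow_right j) μ
  set s : Finset L := hfin.toFinset with hs
  set n : L → ℕ := fun μ => Module.finrank L (f.maxGenEigenspace μ) with hn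
  have key : ∀ j : ℕ, Matrix.trace (M ^ j) = ∑ μ ∈ s, μ ^ j * (n μ : L) := by
    intro j
    rw [← htrf j, LinearMap.trace_eq_sum_trace_restrict' hint hfin (hmaps j)]
    exact Finset.sum_congr rfl fun μ _ => trace_restrict_pow_maxGen f μ j (hmaps j μ)
  have hDsum : ∀ j : ℕ, 1 ≤ j → ∑ μ ∈ s, μ ^ (j - 1) * ((n μ : L) * D μ) = 0 := by
    intro j hj
    have h0 : D (∑ μ ∈ s, μ ^ j * (n μ : L)) = 0 := by
      rw [← key j]; exact htrL j hj
    rw [der_sum' hD_add] at h0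
    have h1 : ∀ μ ∈ s, D (μ ^ j * (n μ : L))
        = (j : L) * (μ ^ (j - 1) * ((n μ : L) * D μ)) := by
      intro μ _
      rw [hD_mul, der_nat' hD_add hD_mul, mul_zero, add_zero, der_pow' hD_add hD_mul]
      ring
    rw [Finset.sum_congr rfl h1, ← Finset.mul_sum] at h0
    have hj0 : (j : L) ≠ 0 := Nat.cast_ne_zero.mpr (by omega)
    exact (mul_eq_zero.mp h0).resolve_left hj0
  set m := s.card with hm
  set e := s.equivFin with he
  set v : Fin m → L := fun i => ((e.symm i : s) : L) with hv
  have hvinj : Function.Injective v := fun a b hab =>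
    e.symm.injective (Subtype.ext hab)
  have hzero : (fun i => (n (v i) : L) * D (v i)) = 0 := by
    apply Matrix.eq_zero_of_forall_pow_sum_mul_pow_eq_zero hvinj
    intro i
    have hds := hDsum ((i : ℕ) + 1) (by omega)
    rw [Nat.add_sub_cancel] at hds
    calc ∑ jj : Fin m, (n (v jj) : L) * D (v jj) * v jj ^ (i : ℕ)
        = ∑ x : s, (n (x : L) : L) * D (x : L) * (x : L) ^ (i : ℕ) :=
          e.symm.sum_comp (fun x : s => (n (x : L) : L) * D (x : L) * (x : L) ^ (i : ℕ))
      _ = ∑ μ ∈ s, (n μ : L) * D μ * μ ^ (i : ℕ) :=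
          Finset.sum_coe_sort s (fun μ => (n μ : L) * D μ * μ ^ (i : ℕ))
      _ = ∑ μ ∈ s, μ ^ (i : ℕ) * ((n μ : L) * D μ) := by
          exact Finset.sum_congr rfl fun μ _ => by ring
      _ = 0 := hds
  -- β is an eigenvalue
  have hev : (Matrix.scalar (Fin r) β - M).det = 0 := by
    have h3 : eval β M.charpoly = (Matrix.scalar (Fin r) β - M).det := by
      rw [Matrix.charpoly, _root_.eval_det, matPolyEquiv_charmatrix]
      simp
    rw [← h3]
    exact hβ
  obtain ⟨v0, hv0ne, hv0⟩ := (Matrix.exists_mulVec_eq_zero_iff).mpr hev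
  have hfv : f v0 = β • v0 := by
    rw [Matrix.sub_mulVec] at hv0
    have hsc : (Matrix.scalar (Fin r) β) *ᵥ v0 = β • v0 := by
      rw [Matrix.scalar_apply]
      funext k
      rw [Matrix.mulVec_diagonal]
      simp [mul_comm]
    have : M *ᵥ v0 = β • v0 := by
      rw [← hsc]
      linear_combination (norm := module) -hv0
    have happ : f v0 = M *ᵥ v0 := rfl
    rw [happ, this]
  have hne : f.maxGenEigenspace β ≠ ⊥ := by
    intro hbot
    have hmem : v0 ∈ f.maxGenEigenspace β := by
      rw [Module.End.mem_maxGenEigenspace]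
      refine ⟨1, ?_⟩
      simp [pow_one, LinearMap.sub_apply, hfv]
    rw [hbot, Submodule.mem_bot] at hmem
    exact hv0ne hmem
  have hβs : β ∈ s := hfin.mem_toFinset.mpr hne
  have hx := congrFun hzero (e ⟨β, by simpa [hs] using hβs⟩)
  have hvx : v (e ⟨β, by simpa [hs] using hβs⟩) = β := by
    rw [hv]
    simp
  rw [hvx] at hx
  have hnpos : n β ≠ 0 := by
    have hnt : Nontrivial (f.maxGenEigenspace β) :=
      Submodule.nontrivial_iff_ne_bot.mpr hne
    exact Module.finrank_pos.ne'
  have hcast : (n β : L) ≠ 0 := Nat.cast_ne_zero.mpr hnpos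
  have := (mul_eq_zero.mp hx).resolve_left hcast
  exact this
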